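/- Let X be a submetrizable space and F ⊆ X. Then F is relatively pseudocompact if and only if for every coarser metrizable topology σ on X, the closure of F in (X, σ) is compact in (X, σ). -/

import Mathlib

universe u

open Topology

def RelPseudocompact {X : Type u} [TopologicalSpace X] (F : Set X) : Prop :=
  ∀ g : X → ℝ, Continuous g → ∃ M : ℝ, ∀ x ∈ F, |g x| ≤ M

def Submetrizable (X : Type u) [t : TopologicalSpace X] : Prop :=
  ∃ σ : TopologicalSpace X, t ≤ σ ∧ @TopologicalSpace.MetrizableSpace X σ

/-- Core metric fact: if every continuous real function on a metric space is bounded on `F`,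
then the closure of `F` is compact. -/
lemma metric_core {X : Type u} [MetricSpace X] (F : Set X)
    (hF : ∀ g : X → ℝ, Continuous g → ∃ M : ℝ, ∀ x ∈ F, |g x| ≤ M) :
    IsCompact (closure F) := by
  by_contra hc
  have hs : ¬ IsSeqCompact (closure F) := fun h =>
    hc (isCompact_iff_isSeqCompact.mpr h)
  unfold IsSeqCompact at hs
  push_neg at hs
  obtain ⟨y, hy, hny⟩ := hs
  -- approximate by points of F
  have hyx : ∀ n : ℕ, ∃ z ∈ F, dist (y n) z < 1 / (n + 1) := fun n =>
    Metric.mem_closure_iff.mp (hy n) _ (by positivity)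
  choose x hxF hxd using hyx
  -- the sequence x has no cluster point
  have hnc : ∀ a : X, ¬ MapClusterPt a Filter.atTop x := by
    intro a ha
    obtain ⟨φ, hφ, hten⟩ := TopologicalSpace.FirstCountableTopology.tendsto_subseq ha
    have hyten : Filter.Tendsto (y ∘ φ) Filter.atTop (𝓝 a) := by
      rw [tendsto_iff_dist_tendsto_zero] at hten ⊢
      have hb : ∀ k : ℕ, dist ((y ∘ φ) k) a ≤ 1 / (k + 1) + dist ((x ∘ φ) k) a := by
        intro k
        have h1 : dist (y (φ k)) (x (φ k)) < 1 / ((φ k : ℝ) + 1) := hxd (φ k)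
        have h2 : (1 : ℝ) / ((φ k : ℝ) + 1) ≤ 1 / ((k : ℝ) + 1) := by
          apply one_div_le_one_div_of_le (by positivity)
          have := hφ.le_apply (x := k)
          have : (k : ℝ) ≤ (φ k : ℝ) := by exact_mod_cast this
          linarith
        calc dist (y (φ k)) a ≤ dist (y (φ k)) (x (φ k)) + dist (x (φ k)) a :=
              dist_triangle _ _ _
          _ ≤ 1 / ((k : ℝ) + 1) + dist (x (φ k)) a := by
              have := dist_nonneg (x := x (φ k)) (y := a); linarith
      have hlim : Filter.Tendsto (fun k : ℕ => 1 / ((k : ℝ) + 1) + dist ((x ∘ φ) k) a)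
          Filter.atTop (𝓝 (0 + 0)) :=
        tendsto_one_div_add_atTop_nhds_zero_nat.add hten
      exact squeeze_zero (fun k => dist_nonneg) hb (by simpa using hlim)
    have hamem : a ∈ closure F :=
      mem_closure_of_tendsto hten (Filter.Eventually.of_forall fun k => hxF (φ k))
    exact hny a hamem φ hφ hyten
  -- helper: produce cluster points from frequent closeness
  have mcp : ∀ a : X, (∀ ε > (0:ℝ), ∃ᶠ n in Filter.atTop, dist (x n) a < ε) →
      MapClusterPt a Filter.atTop x := by
    intro a h
    rw [mapClusterPt_iff_frequently]
    intro s hs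
    obtain ⟨ε, hε, hb⟩ := Metric.mem_nhds_iff.mp hs
    exact (h ε hε).mono fun n hn => hb (by simpa [Metric.mem_ball] using hn)
  -- fibers are finite
  have hfib : ∀ a : X, {n : ℕ | x n = a}.Finite := by
    intro a
    by_contra hinf
    apply hnc a
    apply mcp a
    intro ε hε
    rw [Filter.frequently_atTop]
    intro N
    have hinf' : Set.Infinite {n : ℕ | x n = a} := hinf
    obtain ⟨n, hn, hnN⟩ := hinf'.exists_gt N
    exact ⟨n, le_of_lt hnN, by simp [Set.mem_setOf_eq.mp hn, hε]⟩
  -- the range of x is "uniformly discrete" around each point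
  have hd : ∀ a : X, ∃ ε > (0:ℝ), ∀ n, dist (x n) a < ε → x n = a := by
    intro a
    classical
    by_contra hcon
    push_neg at hcon
    apply hnc a
    apply mcp a
    intro ε hε
    rw [Filter.frequently_atTop]
    intro N
    by_cases hS : ((Finset.range N).filter fun n => x n ≠ a).Nonempty
    · set T := (Finset.range N).filter fun n => x n ≠ a with hT
      set δ := min ε (T.inf' hS fun n => dist (x n) a) with hδdef
      have hδ : 0 < δ := by
        apply lt_min hε
        rw [Finset.lt_inf'_iff]
        intro i hi
        exact dist_pos.mpr (Finset.mem_filter.mp hi).2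
      obtain ⟨m, hm1, hm2⟩ := hcon δ hδ
      refine ⟨m, ?_, lt_of_lt_of_le hm1 (min_le_left _ _)⟩
      by_contra hmN
      push_neg at hmN
      have hmem : m ∈ T := Finset.mem_filter.mpr ⟨Finset.mem_range.mpr hmN, hm2⟩
      have h3 := Finset.inf'_le (fun n => dist (x n) a) hmem
      have h4 := min_le_right ε (T.inf' hS fun n => dist (x n) a)
      have h5 : δ ≤ dist (x m) a := le_trans h4 h3
      linarith
    · obtain ⟨m, hm1, hm2⟩ := hcon ε hε
      refine ⟨m, ?_, hm1⟩
      by_contra hmN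
      push_neg at hmN
      exact hS ⟨m, Finset.mem_filter.mpr ⟨Finset.mem_range.mpr hmN, hm2⟩⟩
  -- S = range x
  set S : Set X := Set.range x with hSdef
  have hSF : S ⊆ F := by rintro _ ⟨n, rfl⟩; exact hxF n
  have hS_closed : IsClosed S := by
    rw [← closure_subset_iff_isClosed]
    intro a ha
    obtain ⟨ε, hε, h⟩ := hd a
    obtain ⟨b, hbS, hab⟩ := Metric.mem_closure_iff.mp ha ε hε
    obtain ⟨n, rfl⟩ := hbS
    exact ⟨n, h n (by rwa [dist_comm] at hab)⟩
  haveI : DiscreteTopology S := by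
    rw [discreteTopology_iff_isOpen_singleton]
    intro s
    obtain ⟨ε, hε, h⟩ := hd s.1
    have hset : ({s} : Set S) = (Subtype.val : S → X) ⁻¹' Metric.ball s.1 ε := by
      ext s'
      simp only [Set.mem_singleton_iff, Set.mem_preimage, Metric.mem_ball]
      constructor
      · rintro rfl; simpa using hε
      · intro hlt
        obtain ⟨n, hn⟩ := s'.2
        apply Subtype.ext
        rw [← hn]
        exact h n (by rw [hn]; exact hlt)
    rw [hset]
    exact Metric.isOpen_ball.preimage continuous_subtype_val
  have hSfin : ¬ S.Finite := by
    intro hfin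
    have huniv : (Set.univ : Set ℕ).Finite := by
      apply Set.Finite.subset (hfin.biUnion (fun a _ => hfib a))
      intro n _
      exact Set.mem_biUnion ⟨n, rfl⟩ rfl
    exact Set.infinite_univ huniv
  haveI : Infinite S := Set.infinite_coe_iff.mpr hSfin
  -- choose an index for each point of S
  have hgex : ∀ s : S, ∃ n : ℕ, x n = s.1 := fun s => s.2
  choose g hgspec using hgex
  have hginj : Function.Injective g := by
    intro s₁ s₂ hgs
    apply Subtype.ext
    rw [← hgspec s₁, ← hgspec s₂, hgs]
  -- Tietze extension
  obtain ⟨G, hG⟩ := ContinuousMap.exists_restrict_eq (X := X) hS_closed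
    ⟨fun s => (g s : ℝ), continuous_of_discreteTopology⟩
  obtain ⟨M, hM⟩ := hF G G.continuous
  have hrange : (Set.range g).Infinite := Set.infinite_range_of_injective hginj
  obtain ⟨m, hmr, hmgt⟩ := hrange.exists_gt ⌈M⌉₊
  obtain ⟨s, hs⟩ := hmr
  have hGs : G s.1 = (g s : ℝ) := by
    have := ContinuousMap.congr_fun hG s
    simpa using this
  have hb := hM s.1 (hSF s.2)
  rw [hGs, hs, abs_of_nonneg (by positivity)] at hb
  have h1 : M ≤ (⌈M⌉₊ : ℝ) := Nat.le_ceil M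
  have h2 : ((⌈M⌉₊ : ℕ) : ℝ) < (m : ℝ) := by exact_mod_cast hmgt
  linarith

/-- The infimum of a metrizable topology with the topology induced by a real function is
metrizable. -/
lemma aux_metrizable {X : Type u} (σ₀ : TopologicalSpace X)
    (hm : @TopologicalSpace.MetrizableSpace X σ₀) (g : X → ℝ) :
    @TopologicalSpace.MetrizableSpace X
      (σ₀ ⊓ TopologicalSpace.induced g inferInstance) := by
  have heq : σ₀ ⊓ TopologicalSpace.induced g inferInstance
      = TopologicalSpace.induced (fun x : X => ((x, g x) : X × ℝ))
          (@instTopologicalSpaceProd X ℝ σ₀ inferInstance) := by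
    show σ₀ ⊓ TopologicalSpace.induced g _
      = TopologicalSpace.induced (fun x : X => ((x, g x) : X × ℝ))
          (TopologicalSpace.induced Prod.fst σ₀ ⊓
            TopologicalSpace.induced Prod.snd inferInstance)
    rw [induced_inf, induced_compose, induced_compose]
    have h1 : (Prod.fst ∘ fun x : X => (x, g x)) = id := rfl
    have h2 : (Prod.snd ∘ fun x : X => (x, g x)) = g := rfl
    rw [h1, h2, induced_id]
  rw [heq]
  have hemb : @Topology.IsEmbedding X (X × ℝ)
      (TopologicalSpace.induced (fun x : X => ((x, g x) : X × ℝ))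
        (@instTopologicalSpaceProd X ℝ σ₀ inferInstance))
      (@instTopologicalSpaceProd X ℝ σ₀ inferInstance)
      (fun x : X => ((x, g x) : X × ℝ)) :=
    @Topology.IsEmbedding.mk X (X × ℝ)
      (TopologicalSpace.induced (fun x : X => ((x, g x) : X × ℝ))
        (@instTopologicalSpaceProd X ℝ σ₀ inferInstance))
      (@instTopologicalSpaceProd X ℝ σ₀ inferInstance)
      (fun x : X => ((x, g x) : X × ℝ))
      (@Topology.IsInducing.mk X (X × ℝ)
        (TopologicalSpace.induced (fun x : X => ((x, g x) : X × ℝ))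
          (@instTopologicalSpaceProd X ℝ σ₀ inferInstance))
        (@instTopologicalSpaceProd X ℝ σ₀ inferInstance)
        (fun x : X => ((x, g x) : X × ℝ)) rfl)
      (fun a b hab => congrArg Prod.fst hab)
  exact @Topology.IsEmbedding.metrizableSpace X (X × ℝ)
    (TopologicalSpace.induced (fun x : X => ((x, g x) : X × ℝ))
      (@instTopologicalSpaceProd X ℝ σ₀ inferInstance))
    (@instTopologicalSpaceProd X ℝ σ₀ inferInstance)
    (@TopologicalSpace.metrizableSpace_prod X ℝ σ₀ inferInstance hm inferInstance)
    _ hemb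

/-- In a submetrizable space, `F` is relatively pseudocompact iff its closure in every coarser
metrizable topology is compact in that topology. -/
theorem relPseudocompact_iff_closure_compact {X : Type u} [t : TopologicalSpace X]
    (hX : Submetrizable X) (F : Set X) :
    RelPseudocompact F ↔
      ∀ σ : TopologicalSpace X, t ≤ σ → @TopologicalSpace.MetrizableSpace X σ →
        @IsCompact X σ (@closure X σ F) := by
  constructor
  · intro hF σ hle hm
    obtain ⟨m, hmeq⟩ : ∃ m : MetricSpace X, m.toUniformSpace.toTopologicalSpace = σ :=
      ⟨@TopologicalSpace.metrizableSpaceMetric X σ hm, rfl⟩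
    subst hmeq
    exact @metric_core X m F (fun g hg => hF g (continuous_le_dom hle hg))
  · intro h g hg
    obtain ⟨σ₀, hle₀, hm₀⟩ := hX
    set σ' := σ₀ ⊓ TopologicalSpace.induced g inferInstance with hσ'
    have hle' : t ≤ σ' := le_inf hle₀ (continuous_iff_le_induced.mp hg)
    have hm' := aux_metrizable σ₀ hm₀ g
    have hcpt := h σ' hle' hm'
    have hgc : @Continuous X ℝ σ' _ g := continuous_iff_le_induced.mpr inf_le_right
    have himg : IsCompact (g '' (@closure X σ' F)) :=
      @IsCompact.image X ℝ σ' _ _ _ hcpt hgc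
    obtain ⟨r, hr⟩ := himg.isBounded.subset_closedBall 0
    refine ⟨r, fun z hz => ?_⟩
    have hmem : g z ∈ g '' (@closure X σ' F) := ⟨z, @subset_closure X σ' F z hz, rfl⟩
    have := hr hmem
    simpa [Real.dist_eq] using this
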